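/- Given a Schreier system S = (M, A, Θ, λ), the construction Σ(S) — with objects the elements of M, hom-sets Σ(S)(a,a) = A_a and Σ(S)(a,b) = ∅ for a ≠ b, composition given by group multiplication, tensor product g⊗f = a_*(f)∘b^*(g) on morphisms g : a→a, f : b→b, associativity constraints λ_{a,b,c} : (ab)c → a(bc), unit object 1, and identity unit constraints — is a monoidal groupoid. In particular: (1) the tensor product is a functor; (2) λ_{a,b,c} are natural in all three variables; (3) the pentagon and triangle axioms hold. -/
import Mathlib


/-- Transport along an equality of indices of an indexed family. -/
def fcast {M : Type*} (A : M → Type*) {x y : M} (h : x = y) (v : A x) : A y := h ▸ v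


theorem fcast_mul {M : Type*} (A : M → Type*) [∀ a : M, Group (A a)] {x y : M}
    (h : x = y) (u v : A x) : fcast A h (u * v) = fcast A h u * fcast A h v := by
  subst h; rfl

/-- The construction `Σ(S)` from a Schreier system `S = (M, A, Θ, λ)` — objects
the elements of `M`, endomorphisms `A_a`, tensor `g ⊗ f := a_*(f) ∘ b^*(g)`,
associators `λ_{a,b,c}`, unit object `1`, and identity unit constraints — is a
monoidal groupoid.  In particular: (1) the tensor product is functorial;
(2) the associators `λ_{a,b,c}` are natural in all three variables; and
(3) the pentagon and triangle axioms hold. -/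
theorem stmt9 {M : Type*} [Monoid M] (A : M → Type*) [∀ a : M, Group (A a)]
    (push : ∀ a b : M, A b →* A (a * b))   -- `a_* : A_b → A_{ab}`
    (pull : ∀ a b : M, A a →* A (a * b))   -- `b^* : A_a → A_{ab}`
    (lam : ∀ a b c : M, A (a * b * c))
    (hc11 : ∀ (a b c : M) (f : A c),
      lam a b c * push (a * b) c f * (lam a b c)⁻¹
        = fcast A (mul_assoc a b c).symm (push a (b * c) (push b c f)))
    (hc12 : ∀ (a b c : M) (g : A b),
      lam a b c * pull (a * b) c (push a b g) * (lam a b c)⁻¹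
        = fcast A (mul_assoc a b c).symm (push a (b * c) (pull b c g)))
    (hc13 : ∀ (a b c : M) (h : A a),
      lam a b c * pull (a * b) c (pull a b h) * (lam a b c)⁻¹
        = fcast A (mul_assoc a b c).symm (pull a (b * c) h))
    (hc2 : ∀ a b c d : M,
      fcast A (show a * (b * c * d) = a * b * c * d by simp [mul_assoc])
          (push a (b * c * d) (lam b c d))
        * fcast A (show a * (b * c) * d = a * b * c * d by simp [mul_assoc])
          (lam a (b * c) d)
        * pull (a * b * c) d (lam a b c)
      = fcast A (show a * b * (c * d) = a * b * c * d by simp [mul_assoc])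
          (lam a b (c * d))
        * lam (a * b) c d)
    (hc3 : ∀ (a b : M) (f : A b) (g : A a),
      push a b f * pull a b g = pull a b g * push a b f)
    (hc4p : ∀ (a : M) (f : A a), push 1 a f = fcast A (one_mul a).symm f)
    (hc4q : ∀ (a : M) (f : A a), pull a 1 f = fcast A (mul_one a).symm f)
    (hc5a : ∀ a b : M, lam 1 a b = 1)
    (hc5b : ∀ a b : M, lam a 1 b = 1)
    (hc5c : ∀ a b : M, lam a b 1 = 1) :
    -- (1) the tensor product is a functor:
    (∀ (a b : M) (g g' : A a) (f f' : A b),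
      push a b (f * f') * pull a b (g * g')
        = (push a b f * pull a b g) * (push a b f' * pull a b g'))
    ∧ (∀ a b : M, push a b (1 : A b) * pull a b (1 : A a) = (1 : A (a * b)))
    -- (2) the associators are natural in all three variables:
    ∧ (∀ (a b c : M) (h : A a) (g : A b) (f : A c),
      lam a b c * (push (a * b) c f * pull (a * b) c (push a b g * pull a b h))
        = fcast A (mul_assoc a b c).symm
            (push a (b * c) (push b c f * pull b c g) * pull a (b * c) h)
          * lam a b c)
    -- (3) the pentagon axiom:
    ∧ (∀ a b c d : M,
      fcast A (show a * (b * c * d) = a * b * c * d by simp [mul_assoc])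
          (push a (b * c * d) (lam b c d))
        * fcast A (show a * (b * c) * d = a * b * c * d by simp [mul_assoc])
          (lam a (b * c) d)
        * pull (a * b * c) d (lam a b c)
      = fcast A (show a * b * (c * d) = a * b * c * d by simp [mul_assoc])
          (lam a b (c * d))
        * lam (a * b) c d)
    -- and the triangle axiom (with identity unit constraints):
    ∧ (∀ a b : M, lam a 1 b = 1) := by
  refine ⟨?_, ?_, ?_, hc2, hc5b⟩
  · intro a b g g' f f'
    simp only [map_mul, ← mul_assoc]
    rw [mul_assoc (push a b f), hc3, ← mul_assoc]
  · intro a b; simp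
  · intro a b c h g f
    have key : lam a b c
        * (push (a * b) c f * pull (a * b) c (push a b g * pull a b h))
        * (lam a b c)⁻¹
        = fcast A (mul_assoc a b c).symm
            (push a (b * c) (push b c f * pull b c g) * pull a (b * c) h) := by
      simp only [map_mul, fcast_mul]
      rw [← hc11 a b c f, ← hc12 a b c g, ← hc13 a b c h]
      group
    rw [← key]; group
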